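/- Let k be a commutative ring and A a non-degenerate idempotent k-algebra, projective as a k-module. Suppose given for every a ∈ A a multiplier (Λ_a, Ρ_a) of the k-algebra A ⊗ A, depending k-linearly on a and multiplicatively (Λ_{aa'} = Λ_a∘Λ_{a'} and Ρ_{aa'} = Ρ_{a'}∘Ρ_a), such that A ⊗ A is non-degenerate and idempotent both as a left A-module via a·u := Λ_a(u) and as a right A-module via u·a := Ρ_a(u). Then for any two non-degenerate idempotent right A-modules M and N that are projective as k-modules, the formula (m⊗n)·a := Σ_{i,j} (mᵢ⊗nⱼ)·Ρ_a(aᵢ⊗bⱼ), taken over any representations m = Σᵢ mᵢ·aᵢ and n = Σⱼ nⱼ·bⱼ, is a well-defined right A-action on M ⊗ N, and with this action M ⊗ N is a non-degenerate idempotent right A-module. -/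

import Mathlib

open TensorProduct

variable (k : Type*) [CommRing k]

/-- `(l, r)` is a multiplier of the k-module `C` with respect to the (bilinear)
multiplication `mu`. -/
def IsMultiplierVia {C : Type*} [AddCommGroup C] [Module k C]
    (mu : C →ₗ[k] C →ₗ[k] C) (l r : C →ₗ[k] C) : Prop :=
  (∀ u v : C, l (mu u v) = mu (l u) v) ∧
  (∀ u v : C, r (mu u v) = mu u (r v)) ∧
  (∀ u v : C, mu u (l v) = mu (r u) v)

section AuxLemmas

variable {R : Type*} [CommRing R]

private lemma finsuppScalarLeft_lTensor {ι N : Type*} [DecidableEq ι] [AddCommGroup N] [Module R N]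
    (φ : N →ₗ[R] N) (x : (ι →₀ R) ⊗[R] N) (i : ι) :
    TensorProduct.finsuppScalarLeft R N ι (LinearMap.lTensor (ι →₀ R) φ x) i
      = φ (TensorProduct.finsuppScalarLeft R N ι x i) := by
  induction x using TensorProduct.induction_on with
  | zero => simp
  | tmul p n => simp [TensorProduct.finsuppScalarLeft_apply_tmul_apply]
  | add x y hx hy => simp [hx, hy]

private lemma ndLeft {ι M N : Type*} [AddCommGroup M] [Module R M] [Module.Projective R M]
    [AddCommGroup N] [Module R N] (ψ : ι → N →ₗ[R] N)
    (hψ : ∀ n : N, (∀ i, ψ i n = 0) → n = 0) (Z : M ⊗[R] N)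
    (hZ : ∀ i, LinearMap.lTensor M (ψ i) Z = 0) : Z = 0 := by
  classical
  obtain ⟨s, hs⟩ := Module.projective_def'.mp ‹Module.Projective R M›
  have hcomm : ∀ i, LinearMap.lTensor (M →₀ R) (ψ i) (LinearMap.rTensor N s Z)
      = LinearMap.rTensor N s (LinearMap.lTensor M (ψ i) Z) := by
    intro i
    rw [← LinearMap.comp_apply, ← LinearMap.comp_apply,
      LinearMap.lTensor_comp_rTensor, LinearMap.rTensor_comp_lTensor]
  have h1 : ∀ m, TensorProduct.finsuppScalarLeft R N M (LinearMap.rTensor N s Z) m = 0 := by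
    intro m
    apply hψ
    intro i
    rw [← finsuppScalarLeft_lTensor, hcomm, hZ, map_zero, map_zero]
    rfl
  have hW : LinearMap.rTensor N s Z = 0 := by
    apply (LinearEquiv.map_eq_zero_iff (TensorProduct.finsuppScalarLeft R N M)).mp
    exact Finsupp.ext h1
  have h2 := congrArg (LinearMap.rTensor N (Finsupp.linearCombination R (id : M → M))) hW
  rwa [← LinearMap.comp_apply, ← LinearMap.rTensor_comp, hs, LinearMap.rTensor_id,
    LinearMap.id_apply, map_zero] at h2

private lemma comm_rTensor {M N : Type*} [AddCommGroup M] [Module R M] [AddCommGroup N]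
    [Module R N] (φ : M →ₗ[R] M) (Z : M ⊗[R] N) :
    TensorProduct.comm R M N (LinearMap.rTensor N φ Z)
      = LinearMap.lTensor N φ (TensorProduct.comm R M N Z) := by
  induction Z using TensorProduct.induction_on with
  | zero => simp
  | tmul m n => simp
  | add x y hx hy => simp [hx, hy]

private lemma ndRight {ι M N : Type*} [AddCommGroup M] [Module R M]
    [AddCommGroup N] [Module R N] [Module.Projective R N] (ψ : ι → M →ₗ[R] M)
    (hψ : ∀ m : M, (∀ i, ψ i m = 0) → m = 0) (Z : M ⊗[R] N)
    (hZ : ∀ i, LinearMap.rTensor N (ψ i) Z = 0) : Z = 0 := by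
  have h : TensorProduct.comm R M N Z = 0 := by
    apply ndLeft ψ hψ
    intro i
    rw [← comm_rTensor, hZ, map_zero]
  exact (LinearEquiv.map_eq_zero_iff _).mp h

end AuxLemmas

/-- Let `A` be a non-degenerate idempotent k-projective algebra and
`a ↦ (Λ_a, Ρ_a)` a k-linear multiplicative family of multipliers of `A ⊗ A` making `A ⊗ A`
a non-degenerate idempotent left and right `A`-module.  Then for any two non-degenerate
idempotent k-projective right `A`-modules `M`, `N`, the formula
`(m⊗n)·a := Σ_{i,j} (mᵢ⊗nⱼ)·Ρ_a(aᵢ⊗bⱼ)` (over any representations `m = Σ mᵢ·aᵢ`,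
`n = Σ nⱼ·bⱼ`) is a well-defined right `A`-action on `M ⊗ N` making it a non-degenerate
idempotent right `A`-module. -/
theorem stmt_14
    (A : Type*) [NonUnitalRing A] [Module k A] [SMulCommClass k A A] [IsScalarTower k A A]
    [Module.Projective k A]
    (hAnd₁ : ∀ a : A, (∀ b : A, a * b = 0) → a = 0)
    (hAnd₂ : ∀ a : A, (∀ b : A, b * a = 0) → a = 0)
    (hAid : ∀ a : A, a ∈ AddSubmonoid.closure {x : A | ∃ b c : A, x = b * c})
    -- the comultiplication data: a family of multipliers of `A ⊗ A`
    (D : A →ₗ[k] (A ⊗[k] A →ₗ[k] A ⊗[k] A) × (A ⊗[k] A →ₗ[k] A ⊗[k] A))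
    (hDmult : ∀ a : A,
      IsMultiplierVia k (TensorProduct.map₂ (LinearMap.mul k A) (LinearMap.mul k A))
        (D a).1 (D a).2)
    (hDhom₁ : ∀ a a' : A, (D (a * a')).1 = (D a).1 ∘ₗ (D a').1)
    (hDhom₂ : ∀ a a' : A, (D (a * a')).2 = (D a').2 ∘ₗ (D a).2)
    -- `A ⊗ A` is a non-degenerate idempotent left `A`-module via `Λ` ...
    (hlnd : ∀ u : A ⊗[k] A, (∀ a : A, (D a).1 u = 0) → u = 0)
    (hlid : ∀ u : A ⊗[k] A,
      u ∈ AddSubmonoid.closure {v : A ⊗[k] A | ∃ (a : A) (w : A ⊗[k] A), v = (D a).1 w})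
    -- ... and a non-degenerate idempotent right `A`-module via `Ρ`
    (hrnd : ∀ u : A ⊗[k] A, (∀ a : A, (D a).2 u = 0) → u = 0)
    (hrid : ∀ u : A ⊗[k] A,
      u ∈ AddSubmonoid.closure {v : A ⊗[k] A | ∃ (a : A) (w : A ⊗[k] A), v = (D a).2 w})
    -- `M` and `N` are non-degenerate idempotent k-projective right `A`-modules
    (M : Type*) [AddCommGroup M] [Module k M] [Module.Projective k M]
    (actM : M →ₗ[k] A →ₗ[k] M)
    (hMassoc : ∀ (m : M) (a a' : A), actM (actM m a) a' = actM m (a * a'))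
    (hMnd : ∀ m : M, (∀ a : A, actM m a = 0) → m = 0)
    (hMid : ∀ m : M, m ∈ AddSubmonoid.closure {x : M | ∃ (m' : M) (a : A), x = actM m' a})
    (N : Type*) [AddCommGroup N] [Module k N] [Module.Projective k N]
    (actN : N →ₗ[k] A →ₗ[k] N)
    (hNassoc : ∀ (n : N) (a a' : A), actN (actN n a) a' = actN n (a * a'))
    (hNnd : ∀ n : N, (∀ a : A, actN n a = 0) → n = 0)
    (hNid : ∀ n : N, n ∈ AddSubmonoid.closure {x : N | ∃ (n' : N) (a : A), x = actN n' a}) :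
    ∃ E : M ⊗[k] N →ₗ[k] A →ₗ[k] M ⊗[k] N,
      -- defining formula on representations
      (∀ (m : M) (n : N) (a : A) (Lm : List (M × A)) (Ln : List (N × A)),
        (Lm.map fun p => actM p.1 p.2).sum = m →
        (Ln.map fun q => actN q.1 q.2).sum = n →
        E (m ⊗ₜ[k] n) a =
          (Lm.map fun p =>
            (Ln.map fun q =>
              TensorProduct.map₂ actM actN (p.1 ⊗ₜ[k] q.1)
                ((D a).2 (p.2 ⊗ₜ[k] q.2))).sum).sum) ∧
      -- it is an associative right `A`-action
      (∀ (x : M ⊗[k] N) (a a' : A), E (E x a) a' = E x (a * a')) ∧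
      -- non-degenerate
      (∀ x : M ⊗[k] N, (∀ a : A, E x a = 0) → x = 0) ∧
      -- idempotent
      (∀ x : M ⊗[k] N,
        x ∈ AddSubmonoid.closure {y : M ⊗[k] N | ∃ (z : M ⊗[k] N) (a : A), y = E z a}) := by
  classical
  unfold IsMultiplierVia at hDmult
  set mu : A ⊗[k] A →ₗ[k] A ⊗[k] A →ₗ[k] A ⊗[k] A :=
    TensorProduct.map₂ (LinearMap.mul k A) (LinearMap.mul k A) with hmu
  set Ψ : M ⊗[k] N →ₗ[k] A ⊗[k] A →ₗ[k] M ⊗[k] N := TensorProduct.map₂ actM actN with hPsi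
  -- basic computation rules
  have psiT : ∀ (m : M) (n : N) (a b : A),
      Ψ (m ⊗ₜ[k] n) (a ⊗ₜ[k] b) = actM m a ⊗ₜ[k] actN n b := by
    intro m n a b
    rw [hPsi]
    simp
  have assoc : ∀ (x : M ⊗[k] N) (u v : A ⊗[k] A), Ψ (Ψ x u) v = Ψ x (mu u v) := by
    intro x u v
    induction x using TensorProduct.induction_on with
    | zero => simp
    | add x y hx hy => simp [map_add, LinearMap.add_apply, hx, hy]
    | tmul m n =>
      induction u using TensorProduct.induction_on with
      | zero => simp
      | add u u' hu hu' => simp [map_add, LinearMap.add_apply, hu, hu']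
      | tmul a b =>
        induction v using TensorProduct.induction_on with
        | zero => simp
        | add v v' hv hv' => simp [map_add, hv, hv']
        | tmul c d =>
          rw [hPsi, hmu]
          simp [hMassoc, hNassoc]
  have psi_eval : ∀ (x : M ⊗[k] N) (a b : A),
      Ψ x (a ⊗ₜ[k] b) = TensorProduct.map (actM.flip a) (actN.flip b) x := by
    intro x a b
    induction x using TensorProduct.induction_on with
    | zero => simp
    | add x y hx hy => simp [map_add, LinearMap.add_apply, hx, hy]
    | tmul m n => rw [psiT]; simp
  -- injectivity of Ψ
  have hker : ∀ x : M ⊗[k] N, Ψ x = 0 → x = 0 := by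
    intro x hx
    have h1 : ∀ b : A, LinearMap.lTensor M (actN.flip b) x = 0 := by
      intro b
      apply ndRight (fun a : A => actM.flip a) (fun m hm => hMnd m fun a => hm a)
      intro a
      have h2 : TensorProduct.map (actM.flip a) (actN.flip b) x = 0 := by
        rw [← psi_eval, hx, LinearMap.zero_apply]
      rw [← LinearMap.rTensor_comp_lTensor, LinearMap.comp_apply] at h2
      exact h2
    exact ndLeft (fun b : A => actN.flip b) (fun n hn => hNnd n fun b => hn b) x h1
  have hJinj : Function.Injective Ψ := by
    intro x y hxy
    have h0 : Ψ (x - y) = 0 := by rw [map_sub, hxy, sub_self]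
    exact sub_eq_zero.mp (hker _ h0)
  -- idempotency of M ⊗ N as an A⊗A module
  have idMN : ∀ x : M ⊗[k] N, x ∈ AddSubmonoid.closure
      {y : M ⊗[k] N | ∃ (z : M ⊗[k] N) (u : A ⊗[k] A), y = Ψ z u} := by
    intro x
    induction x using TensorProduct.induction_on with
    | zero => exact zero_mem _
    | add x y hx hy => exact add_mem hx hy
    | tmul m n =>
      refine AddSubmonoid.closure_induction
        (motive := fun m _ => m ⊗ₜ[k] n ∈ AddSubmonoid.closure
          {y : M ⊗[k] N | ∃ (z : M ⊗[k] N) (u : A ⊗[k] A), y = Ψ z u})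
        ?_ ?_ ?_ (hMid m)
      · rintro m₀ ⟨m', a, rfl⟩
        refine AddSubmonoid.closure_induction
          (motive := fun n _ => actM m' a ⊗ₜ[k] n ∈ AddSubmonoid.closure
            {y : M ⊗[k] N | ∃ (z : M ⊗[k] N) (u : A ⊗[k] A), y = Ψ z u})
          ?_ ?_ ?_ (hNid n)
        · rintro n₀ ⟨n', b, rfl⟩
          exact AddSubmonoid.subset_closure ⟨m' ⊗ₜ[k] n', a ⊗ₜ[k] b, (psiT m' n' a b).symm⟩
        · beta_reduce; rw [tmul_zero]; exact zero_mem _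
        · intro x y _ _ hx hy
          beta_reduce; rw [tmul_add]; exact add_mem hx hy
      · beta_reduce; rw [zero_tmul]; exact zero_mem _
      · intro x y _ _ hx hy
        beta_reduce; rw [add_tmul]; exact add_mem hx hy
  -- key multiplier computation
  have key : ∀ (z : M ⊗[k] N) (u : A ⊗[k] A) (a : A),
      (Ψ (Ψ z u)).comp (D a).1 = Ψ (Ψ z ((D a).2 u)) := by
    intro z u a
    apply LinearMap.ext
    intro v
    rw [LinearMap.comp_apply, assoc, (hDmult a).2.2 u v, ← assoc]
  -- range condition
  have hrange : ∀ (a : A) (x : M ⊗[k] N), (Ψ x).comp (D a).1 ∈ LinearMap.range Ψ := by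
    intro a x
    refine AddSubmonoid.closure_induction
      (motive := fun x _ => (Ψ x).comp (D a).1 ∈ LinearMap.range Ψ) ?_ ?_ ?_ (idMN x)
    · rintro y ⟨z, u, rfl⟩
      rw [key]
      exact ⟨_, rfl⟩
    · beta_reduce; rw [map_zero, LinearMap.zero_comp]
      exact zero_mem _
    · intro x y _ _ hx hy
      beta_reduce; rw [map_add, LinearMap.add_comp]
      exact add_mem hx hy
  -- construction of the action E
  obtain ⟨E, hE⟩ : ∃ E : M ⊗[k] N →ₗ[k] A →ₗ[k] M ⊗[k] N,
      ∀ (x : M ⊗[k] N) (a : A), Ψ (E x a) = (Ψ x).comp (D a).1 := by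
    set e : (M ⊗[k] N) ≃ₗ[k] LinearMap.range Ψ := LinearEquiv.ofInjective Ψ hJinj with he
    have hΨE : ∀ (x : M ⊗[k] N) (a : A),
        Ψ (e.symm ⟨(Ψ x).comp (D a).1, hrange a x⟩) = (Ψ x).comp (D a).1 := by
      intro x a
      rw [he]
      exact LinearEquiv.ofInjective_symm_apply (f := Ψ) (h := hJinj)
        ⟨(Ψ x).comp (D a).1, hrange a x⟩
    have hD1add : ∀ a a' : A, (D (a + a')).1 = (D a).1 + (D a').1 := by
      intro a a'; rw [map_add]; rfl
    have hD1smul : ∀ (c : k) (a : A), (D (c • a)).1 = c • (D a).1 := by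
      intro c a; rw [map_smul]; rfl
    refine ⟨LinearMap.mk₂ k (fun x a => e.symm ⟨(Ψ x).comp (D a).1, hrange a x⟩)
      ?_ ?_ ?_ ?_, ?_⟩
    · intro x y a
      apply hJinj
      rw [map_add Ψ (e.symm _) (e.symm _), hΨE, hΨE, hΨE, map_add, LinearMap.add_comp]
    · intro c x a
      apply hJinj
      rw [map_smul Ψ c (e.symm _), hΨE, hΨE, map_smul, LinearMap.smul_comp]
    · intro x a a'
      apply hJinj
      rw [map_add Ψ (e.symm _) (e.symm _), hΨE, hΨE, hΨE, hD1add, LinearMap.comp_add]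
    · intro c x a
      apply hJinj
      rw [map_smul Ψ c (e.symm _), hΨE, hΨE, hD1smul, LinearMap.comp_smul]
    · intro x a
      rw [LinearMap.mk₂_apply]
      exact hΨE x a
  -- list sum helpers
  have lsum₁ : ∀ (L : List (M × A)) (f : M × A → M ⊗[k] N) (w : A ⊗[k] A),
      Ψ (L.map f).sum w = (L.map fun p => Ψ (f p) w).sum := by
    intro L f w
    induction L with
    | nil => simp
    | cons p L ih => simp [map_add, LinearMap.add_apply, ih]
  have lsum₂ : ∀ (L : List (N × A)) (f : N × A → M ⊗[k] N) (w : A ⊗[k] A),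
      Ψ (L.map f).sum w = (L.map fun p => Ψ (f p) w).sum := by
    intro L f w
    induction L with
    | nil => simp
    | cons p L ih => simp [map_add, LinearMap.add_apply, ih]
  have lsumN : ∀ (L : List (N × A)) (m₀ : M) (w : A ⊗[k] A),
      (L.map fun q => Ψ (m₀ ⊗ₜ[k] actN q.1 q.2) w).sum
        = Ψ (m₀ ⊗ₜ[k] (L.map fun q => actN q.1 q.2).sum) w := by
    intro L m₀ w
    induction L with
    | nil => simp
    | cons q L ih => simp [tmul_add, map_add, LinearMap.add_apply, ih]
  have lsumM : ∀ (L : List (M × A)) (n₀ : N) (w : A ⊗[k] A),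
      (L.map fun p => Ψ (actM p.1 p.2 ⊗ₜ[k] n₀) w).sum
        = Ψ ((L.map fun p => actM p.1 p.2).sum ⊗ₜ[k] n₀) w := by
    intro L n₀ w
    induction L with
    | nil => simp
    | cons p L ih => simp [add_tmul, map_add, LinearMap.add_apply, ih]
  refine ⟨E, ?_, ?_, ?_, ?_⟩
  · -- defining formula
    intro m n a Lm Ln hm hn
    apply hJinj
    rw [hE]
    apply LinearMap.ext
    intro v
    rw [LinearMap.comp_apply]
    simp only [lsum₁]
    simp only [lsum₂]
    simp only [assoc]
    simp only [← (hDmult a).2.2]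
    simp only [← assoc]
    simp only [psiT]
    simp only [lsumN, hn]
    simp only [lsumM, hm]
  · -- associativity
    intro x a a'
    apply hJinj
    rw [hE, hE, hE, hDhom₁ a a', ← LinearMap.comp_assoc]
  · -- non-degeneracy
    intro x hx
    apply hker
    apply LinearMap.ext
    intro u
    rw [LinearMap.zero_apply]
    refine AddSubmonoid.closure_induction (motive := fun u _ => Ψ x u = 0) ?_ ?_ ?_ (hlid u)
    · rintro w ⟨a, v, rfl⟩
      have h1 : (Ψ x).comp (D a).1 = 0 := by
        rw [← hE, hx a, map_zero]
      simpa using LinearMap.congr_fun h1 v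
    · exact map_zero (Ψ x)
    · intro u v _ _ hu hv
      beta_reduce; rw [map_add, hu, hv, add_zero]
  · -- idempotency
    intro x
    have hEval : ∀ (z : M ⊗[k] N) (u : A ⊗[k] A) (a : A),
        E (Ψ z u) a = Ψ z ((D a).2 u) := by
      intro z u a
      apply hJinj
      rw [hE, key]
    have key2 : ∀ (z : M ⊗[k] N) (u : A ⊗[k] A), Ψ z u ∈ AddSubmonoid.closure
        {y : M ⊗[k] N | ∃ (z' : M ⊗[k] N) (a : A), y = E z' a} := by
      intro z u
      refine AddSubmonoid.closure_induction
        (motive := fun u _ => Ψ z u ∈ AddSubmonoid.closure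
          {y : M ⊗[k] N | ∃ (z' : M ⊗[k] N) (a : A), y = E z' a}) ?_ ?_ ?_ (hrid u)
      · rintro w ⟨a, v, rfl⟩
        exact AddSubmonoid.subset_closure ⟨Ψ z v, a, (hEval z v a).symm⟩
      · beta_reduce; rw [map_zero]; exact zero_mem _
      · intro u v _ _ hu hv
        beta_reduce; rw [map_add]; exact add_mem hu hv
    refine AddSubmonoid.closure_le.mpr ?_ (idMN x)
    rintro y ⟨z, u, rfl⟩
    exact key2 z u
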